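/- Let k ≥ 1, let q be a unit imaginary quaternion with q ≠ ±i, and let W_{k,q} ⊆ ℍ^k be the real vector subspace of all vectors of the form (a₁ + b₁q + b₂i, a₂ + b₂q + b₃i, …, a_{k−1} + b_{k−1}q + b_k i, a_k + b_k q), where a₁, b₁, …, a_k, b_k are real numbers. Then the real vector space W_{k,q} ∩ q•W_{k,q} has dimension two. -/

import Mathlib

open Quaternion

/-- The quaternion unit `i`. -/
noncomputable def iq : Quaternion ℝ := ⟨0, 1, 0, 0⟩

/-- Componentwise left multiplication by a quaternion `p` on `ℍ^n`, as a real-linear map. -/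
noncomputable def mulLeftLM (n : ℕ) (p : Quaternion ℝ) :
    (Fin n → Quaternion ℝ) →ₗ[ℝ] (Fin n → Quaternion ℝ) :=
  LinearMap.pi fun i => (LinearMap.mulLeft ℝ p).comp (LinearMap.proj i)

/-- The model subspace `W_{k,q} ⊆ ℍ^k` (with `u` the extra imaginary unit, `u = i` when
`q ≠ ±i`): all vectors `(a₁ + b₁q + b₂u, a₂ + b₂q + b₃u, …, a_{k−1} + b_{k−1}q + b_k u,
a_k + b_k q)` with the `a`'s and `b`'s real. -/
noncomputable def WkSub (k : ℕ) (q u : Quaternion ℝ) :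
    Submodule ℝ (Fin k → Quaternion ℝ) where
  carrier := {y | ∃ (a : Fin k → ℝ) (b : ℕ → ℝ), (∀ m, k ≤ m → b m = 0) ∧
    ∀ t : Fin k, y t = ((a t : ℝ) : ℍ[ℝ]) + b t • q + b ((t : ℕ) + 1) • u}
  add_mem' := by
    rintro y y' ⟨a, b, hb, hy⟩ ⟨a', b', hb', hy'⟩
    refine ⟨a + a', fun m => b m + b' m, fun m hm => by simp [hb m hm, hb' m hm], fun t => ?_⟩
    simp only [Pi.add_apply, hy t, hy' t]
    push_cast
    module
  zero_mem' :=
    ⟨0, 0, fun m _ => rfl, fun t => by simp⟩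
  smul_mem' := by
    rintro r y ⟨a, b, hb, hy⟩
    refine ⟨r • a, fun m => r * b m, fun m hm => by simp [hb m hm], fun t => ?_⟩
    simp only [Pi.smul_apply, hy t]
    ext <;> simp <;> ring

/-- The component equations extracted from `q * (a' + b'q + c'i) = a + bq + ci`. -/
lemma aux_component (q : Quaternion ℝ) (hre : q.re = 0)
    (hnorm : q.imI ^ 2 + q.imJ ^ 2 + q.imK ^ 2 = 1)
    (hjk : q.imJ ^ 2 + q.imK ^ 2 ≠ 0)
    (a b c a' b' c' : ℝ)
    (h : q * (((a' : ℝ) : ℍ[ℝ]) + b' • q + c' • iq) = ((a : ℝ) : ℍ[ℝ]) + b • q + c • iq) :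
    c' = 0 ∧ b = a' ∧ c = 0 ∧ a = -b' := by
  rw [Quaternion.ext_iff] at h
  simp only [Quaternion.re_mul, Quaternion.imI_mul, Quaternion.imJ_mul, Quaternion.imK_mul,
    Quaternion.re_add, Quaternion.imI_add, Quaternion.imJ_add, Quaternion.imK_add,
    Quaternion.re_smul, Quaternion.imI_smul, Quaternion.imJ_smul, Quaternion.imK_smul,
    Quaternion.re_coe, Quaternion.imI_coe, Quaternion.imJ_coe, Quaternion.imK_coe,
    smul_eq_mul, hre, mul_zero, zero_mul, add_zero, zero_add, mul_one] at h
  simp only [iq, mul_zero, zero_mul, add_zero, zero_add, mul_one] at h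
  obtain ⟨h1, h2, h3, h4⟩ := h
  have hc' : c' = 0 := by
    have h5 : c' * (q.imJ ^ 2 + q.imK ^ 2) = 0 := by linear_combination q.imK * h3 - q.imJ * h4
    exact (mul_eq_zero.mp h5).resolve_right hjk
  have hb : b = a' := by
    have h5 : (b - a') * (q.imJ ^ 2 + q.imK ^ 2) = 0 := by
      linear_combination (-q.imJ) * h3 - q.imK * h4
    have := (mul_eq_zero.mp h5).resolve_right hjk
    linarith
  exact ⟨hc', hb, by linear_combination -h2 - q.imI * hb,
    by linear_combination -h1 - b' * hnorm - q.imI * hc'⟩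

set_option maxHeartbeats 1000000 in
/-- For `k ≥ 1` and a unit imaginary quaternion `q ≠ ±i`, the real vector space
`W_{k,q} ∩ q•W_{k,q}` has dimension two. -/
theorem stmt13 (k : ℕ) (hk : 1 ≤ k) (q : Quaternion ℝ) (hq : q ^ 2 = -1)
    (hqi : q ≠ iq) (hqi' : q ≠ -iq) :
    Module.finrank ℝ ↥(WkSub k q iq ⊓ (WkSub k q iq).map (mulLeftLM k q)) = 2 := by
  -- basic facts about q
  have hq' := hq
  rw [sq, Quaternion.ext_iff] at hq'
  simp only [Quaternion.re_mul, Quaternion.imI_mul, Quaternion.imJ_mul, Quaternion.imK_mul,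
    Quaternion.re_neg, Quaternion.imI_neg, Quaternion.imJ_neg, Quaternion.imK_neg,
    Quaternion.re_one, Quaternion.imI_one, Quaternion.imJ_one, Quaternion.imK_one,
    neg_zero] at hq'
  obtain ⟨h1, h2, h3, h4⟩ := hq'
  have hre : q.re = 0 := by
    by_contra h0
    have hi : q.imI = 0 := by
      rcases mul_eq_zero.mp (show q.re * q.imI = 0 by linarith) with h | h
      exacts [absurd h h0, h]
    have hj : q.imJ = 0 := by
      rcases mul_eq_zero.mp (show q.re * q.imJ = 0 by nlinarith) with h | h
      exacts [absurd h h0, h]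
    have hk : q.imK = 0 := by
      rcases mul_eq_zero.mp (show q.re * q.imK = 0 by nlinarith) with h | h
      exacts [absurd h h0, h]
    nlinarith
  have hnorm : q.imI ^ 2 + q.imJ ^ 2 + q.imK ^ 2 = 1 := by nlinarith
  have hjk : q.imJ ^ 2 + q.imK ^ 2 ≠ 0 := by
    intro h0
    have hj : q.imJ = 0 := by nlinarith
    have hk' : q.imK = 0 := by nlinarith
    have hi2 : q.imI ^ 2 = 1 := by nlinarith
    have hcase : (q.imI - 1) * (q.imI + 1) = 0 := by nlinarith
    rcases mul_eq_zero.mp hcase with h | h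
    · exact hqi (by ext <;> simp [iq, hre, hj, hk'] <;> linarith)
    · exact hqi' (by ext <;> simp only [Quaternion.re_neg, Quaternion.imI_neg, Quaternion.imJ_neg,
      Quaternion.imK_neg] <;> simp [iq, hre, hj, hk'] <;> linarith)
  have hq0 : q ≠ 0 := by intro h; rw [h] at hq; simp [pow_two] at hq
  -- the distinguished index and spanning vectors
  set z : Fin k := ⟨0, hk⟩ with hz
  set v1 : Fin k → ℍ[ℝ] := Pi.single z 1 with hv1
  set v2 : Fin k → ℍ[ℝ] := Pi.single z q with hv2
  have hmul : ∀ (w : Fin k → ℍ[ℝ]) (t : Fin k), mulLeftLM k q w t = q * w t := fun w t => rfl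
  have hSeq : WkSub k q iq ⊓ (WkSub k q iq).map (mulLeftLM k q)
      = Submodule.span ℝ (Set.range ![v1, v2]) := by
    apply le_antisymm
    · rintro y ⟨⟨a, b, hb, hy⟩, w, ⟨a', b', hb', hw⟩, hqw⟩
      have key : ∀ t : Fin k, b' ((t : ℕ) + 1) = 0 ∧ b t = a' t ∧ b ((t : ℕ) + 1) = 0 ∧
          a t = -(b' t) := by
        intro t
        have h : q * w t = y t := by rw [← hmul w t, hqw]
        rw [hy t, hw t] at h
        exact aux_component q hre hnorm hjk (a t) (b t) (b ((t : ℕ) + 1)) (a' t) (b' t)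
          (b' ((t : ℕ) + 1)) h
      have b'zero : ∀ m : ℕ, 1 ≤ m → b' m = 0 := by
        intro m hm
        rcases lt_or_ge (m - 1) k with hmk | hmk
        · have := (key ⟨m - 1, hmk⟩).1
          simpa [Nat.sub_add_cancel hm] using this
        · exact hb' m (by omega)
      have bzero : ∀ m : ℕ, 1 ≤ m → b m = 0 := by
        intro m hm
        rcases lt_or_ge (m - 1) k with hmk | hmk
        · have := (key ⟨m - 1, hmk⟩).2.2.1
          simpa [Nat.sub_add_cancel hm] using this
        · exact hb m (by omega)
      have hy' : y = a z • v1 + b 0 • v2 := by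
        funext t
        by_cases ht : t = z
        · subst ht
          rw [hy z]
          have hz0 : ((z : Fin k) : ℕ) = 0 := rfl
          have hb1 : b ((z : ℕ) + 1) = 0 := bzero _ (by omega)
          simp only [hv1, hv2, Pi.add_apply, Pi.smul_apply, Pi.single_eq_same, hz0, hb1,
            zero_smul, add_zero]
          ext <;> simp [bzero 1 le_rfl]
        · have ht1 : 1 ≤ (t : ℕ) := by
            rcases Nat.eq_zero_or_pos (t : ℕ) with h0 | h0
            · exact absurd (Fin.ext h0) ht
            · exact h0
          rw [hy t]
          have ha : a t = -(b' (t : ℕ)) := (key t).2.2.2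
          have hbt : b (t : ℕ) = 0 := bzero _ ht1
          have hbt1 : b ((t : ℕ) + 1) = 0 := bzero _ (by omega)
          have hb't : b' (t : ℕ) = 0 := b'zero _ ht1
          simp [hv1, hv2, Pi.single_eq_of_ne ht, ha, hbt, hbt1, hb't]
      rw [hy']
      exact add_mem (Submodule.smul_mem _ _ (Submodule.subset_span ⟨0, rfl⟩))
        (Submodule.smul_mem _ _ (Submodule.subset_span ⟨1, rfl⟩))
    · rw [Submodule.span_le]
      rintro x ⟨n, rfl⟩
      have hv1W : v1 ∈ WkSub k q iq := by
        refine ⟨fun t => if t = z then 1 else 0, 0, fun m _ => rfl, fun t => ?_⟩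
        by_cases ht : t = z
        · subst ht; simp [hv1]
        · simp [hv1, Pi.single_eq_of_ne ht, ht]
      have hv2W : v2 ∈ WkSub k q iq := by
        refine ⟨0, fun m => if m = 0 then 1 else 0, fun m hm => by
          simp only [ite_eq_right_iff]; intro h0; omega, fun t => ?_⟩
        by_cases ht : t = z
        · subst ht
          simp [hv2, show ((z : Fin k) : ℕ) = 0 from rfl]
        · have ht1 : (t : ℕ) ≠ 0 := fun h0 => ht (Fin.ext h0)
          simp [hv2, Pi.single_eq_of_ne ht, ht1]
      fin_cases n
      · -- v1 ∈ W ⊓ map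
        show v1 ∈ _
        refine ⟨hv1W, Pi.single z (-q), ?_, ?_⟩
        · refine ⟨0, fun m => if m = 0 then -1 else 0, fun m hm => by
            simp only [ite_eq_right_iff]; intro h0; omega, fun t => ?_⟩
          by_cases ht : t = z
          · subst ht
            simp [show ((z : Fin k) : ℕ) = 0 from rfl]
          · have ht1 : (t : ℕ) ≠ 0 := fun h0 => ht (Fin.ext h0)
            simp [Pi.single_eq_of_ne ht, ht1]
        · funext t
          rw [hmul]
          by_cases ht : t = z
          · subst ht
            simp only [Pi.single_eq_same, hv1]
            rw [mul_neg, ← sq, hq, neg_neg]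
          · simp [Pi.single_eq_of_ne ht, hv1]
      · -- v2 ∈ W ⊓ map
        show v2 ∈ _
        refine ⟨hv2W, v1, hv1W, ?_⟩
        funext t
        rw [hmul]
        by_cases ht : t = z
        · subst ht; simp [hv1, hv2]
        · simp [hv1, hv2, Pi.single_eq_of_ne ht]
  rw [hSeq]
  have hli : LinearIndependent ℝ ![v1, v2] := by
    rw [LinearIndependent.pair_iff]
    intro s t hst
    have h0 := congrFun hst z
    simp only [hv1, hv2, Pi.add_apply, Pi.smul_apply, Pi.single_eq_same, Pi.zero_apply] at h0
    have hsre := congrArg QuaternionAlgebra.re h0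
    simp only [Quaternion.re_add, Quaternion.re_smul, Quaternion.re_one, Quaternion.re_zero,
      smul_eq_mul, mul_one, hre, mul_zero, add_zero] at hsre
    have hs : s = 0 := hsre
    have ht : t = 0 := by
      rw [hs, zero_smul, zero_add] at h0
      rcases smul_eq_zero.mp h0 with h | h
      · exact h
      · exact absurd h hq0
    exact ⟨hs, ht⟩
  rw [finrank_span_eq_card hli]
  simp
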